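/- Every free group is bi-orderable. -/

import Mathlib

namespace FGBO
variable {α : Type*}



variable {α : Type*}

/-- Noncommutative "power series" over α with ℤ coefficients: functions on the free monoid. -/
def Mag (α : Type*) : Type _ := List α → ℤ

instance : AddCommGroup (Mag α) := Pi.addCommGroup

/-- Convolution. -/
def conv (f g : Mag α) : Mag α := fun w =>
  ∑ p ∈ Finset.range (w.length + 1), f (w.take p) * g (w.drop p)

def mone : Mag α := fun w => match w with | [] => 1 | _ => 0

@[simp] lemma mone_nil : (mone : Mag α) [] = 1 := rfl
@[simp] lemma mone_cons (a : α) (t : List α) : mone (a :: t) = 0 := rfl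

lemma conv_nil (f g : Mag α) : conv f g [] = f [] * g [] := by
  simp [conv]

lemma conv_cons (f g : Mag α) (a : α) (t : List α) :
    conv f g (a :: t) = f [] * g (a :: t) + conv (fun u => f (a :: u)) g t := by
  show (∑ p ∈ Finset.range (t.length + 1 + 1), f ((a :: t).take p) * g ((a :: t).drop p)) = _
  rw [Finset.sum_range_succ']
  simp [conv, add_comm]

lemma conv_zero_left (g : Mag α) (w : List α) : conv (fun _ => (0:ℤ)) g w = 0 := by
  simp [conv]

lemma conv_add_left (x y g : Mag α) (w : List α) :
    conv (fun u => x u + y u) g w = conv x g w + conv y g w := by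
  simp [conv, add_mul, Finset.sum_add_distrib]

lemma conv_add_right (f x y : Mag α) (w : List α) :
    conv f (fun u => x u + y u) w = conv f x w + conv f y w := by
  simp [conv, mul_add, Finset.sum_add_distrib]

lemma conv_smul_left (c : ℤ) (x g : Mag α) (w : List α) :
    conv (fun u => c * x u) g w = c * conv x g w := by
  simp [conv, Finset.mul_sum, mul_assoc]

lemma one_conv (g : Mag α) (w : List α) : conv mone g w = g w := by
  cases w with
  | nil => simp [conv_nil, mone]
  | cons a t =>
      rw [conv_cons]
      have h1 : (fun u => mone (a :: u)) = fun _ => (0:ℤ) := by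
        funext u; simp [mone]
      rw [h1, conv_zero_left]
      simp [mone]

lemma conv_one (f : Mag α) (w : List α) : conv f mone w = f w := by
  induction w generalizing f with
  | nil => simp [conv_nil, mone]
  | cons a t ih =>
      rw [conv_cons, ih (fun u => f (a :: u))]
      simp [mone]

lemma conv_assoc (w : List α) (f g h : Mag α) :
    conv (conv f g) h w = conv f (conv g h) w := by
  induction w generalizing f g h with
  | nil => simp [conv_nil, mul_assoc]
  | cons a t ih =>
      rw [conv_cons, conv_cons]
      have h1 : (fun u => conv f g (a :: u))
          = fun u => f [] * g (a :: u) + conv (fun v => f (a :: v)) g u := by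
        funext u; rw [conv_cons]
      rw [h1]
      rw [show (fun u => f [] * g (a :: u) + conv (fun v => f (a :: v)) g u)
          = (fun u => (fun z => f [] * g (a :: z)) u + (fun z => conv (fun v => f (a :: v)) g z) u) from rfl]
      rw [conv_add_left (fun z => f [] * g (a :: z)) (fun z => conv (fun v => f (a :: v)) g z) h t,
        conv_smul_left (f []) (fun z => g (a :: z)) h t, ih (fun v => f (a :: v)) g h, conv_cons, conv_nil]
      ring

instance : Ring (Mag α) :=
  { (inferInstance : AddCommGroup (Mag α)) with
    one := mone
    mul := conv
    mul_assoc := fun f g h => funext fun w => conv_assoc w f g h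
    one_mul := fun f => funext fun w => one_conv f w
    mul_one := fun f => funext fun w => conv_one f w
    left_distrib := fun f g h => funext fun w => conv_add_right f g h w
    right_distrib := fun f g h => funext fun w => conv_add_left f g h w
    zero_mul := fun f => funext fun w => by
      show conv (fun _ => 0) f w = 0; exact conv_zero_left f w
    mul_zero := fun f => funext fun w => by
      show conv f (fun _ => 0) w = 0
      simp [conv] }

@[simp] lemma mul_apply (f g : Mag α) (w : List α) :
    (f * g) w = ∑ p ∈ Finset.range (w.length + 1), f (w.take p) * g (w.drop p) := rfl

@[simp] lemma one_nil : (1 : Mag α) [] = 1 := rfl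
@[simp] lemma one_cons (a : α) (t : List α) : (1 : Mag α) (a :: t) = 0 := rfl

@[simp] lemma sub_apply (f g : Mag α) (w : List α) : (f - g) w = f w - g w := rfl

lemma mul_apply' (f g : Mag α) (w : List α) : (f * g) w = conv f g w := rfl

lemma conv_apply (f g : Mag α) (w : List α) :
    conv f g w = ∑ p ∈ Finset.range (w.length + 1), f (w.take p) * g (w.drop p) := rfl

lemma one_conv' (g : Mag α) (w : List α) : conv (1 : Mag α) g w = g w := one_conv g w



section Linear
variable [LinearOrder α]

/-- the series 1 + X_a -/
def ga (a : α) : Mag α := fun w => if w = [] ∨ w = [a] then 1 else 0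

/-- the series (1 + X_a)⁻¹ = 1 - X_a + X_a² - ... -/
def ia (a : α) : Mag α := fun w => if w = List.replicate w.length a then (-1)^w.length else 0

@[simp] lemma ga_nil (a : α) : ga a [] = 1 := by simp [ga]
@[simp] lemma ia_nil (a : α) : ia a [] = 1 := by simp [ia]
@[simp] lemma ga_single (a : α) : ga a [a] = 1 := by simp [ga]
@[simp] lemma ia_single (a : α) : ia a [a] = -1 := by simp [ia]

lemma ia_cons (a : α) (t : List α) : ia a (a :: t) = -(ia a t) := by
  simp only [ia, List.length_cons, List.replicate_succ, List.cons.injEq, true_and, pow_succ]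
  split <;> ring

lemma ia_cons_ne (a : α) {b : α} (hb : b ≠ a) {t : List α} : ia a (b :: t) = 0 := by
  simp only [ia, List.length_cons, List.replicate_succ, List.cons.injEq]
  rw [if_neg]; rintro ⟨h, -⟩; exact hb h

lemma ga_mul_ia (a : α) : (ga a) * (ia a) = 1 := by
  funext w
  rw [mul_apply']
  cases w with
  | nil => simp [conv_nil]
  | cons b t =>
      rw [conv_cons]
      by_cases hb : b = a
      · subst hb
        have h1 : (fun u => ga b (b :: u)) = (1 : Mag α) := by
          funext u
          cases u <;> simp [ga]
        rw [h1, one_conv', ia_cons]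
        simp
      · have h1 : (fun u => ga a (b :: u)) = fun _ => (0:ℤ) := by
          funext u; simp [ga, hb]
        rw [h1, conv_zero_left]
        rw [ia_cons_ne a hb]
        simp [ga, hb]

lemma ia_mul_ga (a : α) : (ia a) * (ga a) = 1 := by
  funext w
  rw [mul_apply']
  induction w with
  | nil => simp [conv_nil]
  | cons b t ih =>
      rw [conv_cons]
      by_cases hb : b = a
      · subst hb
        have h1 : (fun u => ia b (b :: u)) = fun u => (-1) * ia b u := by
          funext u; rw [ia_cons]; ring
        rw [h1, conv_smul_left, ih]
        cases t <;> simp [ga]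
      · have h1 : (fun u => ia a (b :: u)) = fun _ => (0:ℤ) := by
          funext u; exact ia_cons_ne a hb
        rw [h1, conv_zero_left]
        simp [ga, hb]

def gu (a : α) : (Mag α)ˣ := ⟨ga a, ia a, ga_mul_ia a, ia_mul_ga a⟩

lemma gu_val (a : α) : ((gu a : (Mag α)ˣ) : Mag α) = ga a := rfl

lemma gu_inv_val (a : α) : (((gu a)⁻¹ : (Mag α)ˣ) : Mag α) = ia a := rfl


/-- `f` is supported on powers of the single letter `a`, with constant term 1. -/
def SuppPow (a : α) (f : Mag α) : Prop :=
  f [] = 1 ∧ ∀ w, f w ≠ 0 → w = List.replicate w.length a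

lemma suppPow_one (a : α) : SuppPow a (1 : Mag α) := by
  refine ⟨one_nil, fun w hw => ?_⟩
  cases w with
  | nil => rfl
  | cons b t => simp at hw

lemma suppPow_ga (a : α) : SuppPow a (ga a) := by
  refine ⟨ga_nil a, fun w hw => ?_⟩
  have h : w = [] ∨ w = [a] := by by_contra h; simp [ga, h] at hw
  rcases h with h | h <;> simp [h]

lemma suppPow_ia (a : α) : SuppPow a (ia a) := by
  refine ⟨ia_nil a, fun w hw => ?_⟩
  by_contra h; simp [ia, h] at hw

lemma suppPow_mul {a : α} {f g : Mag α} (hf : SuppPow a f) (hg : SuppPow a g) :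
    SuppPow a (f * g) := by
  constructor
  · rw [mul_apply', conv_nil, hf.1, hg.1, mul_one]
  · intro w hw
    rw [mul_apply] at hw
    obtain ⟨p, -, hne⟩ := Finset.exists_ne_zero_of_sum_ne_zero hw
    obtain ⟨h1, h2⟩ := mul_ne_zero_iff.mp hne
    have e1 := hf.2 _ h1
    have e2 := hg.2 _ h2
    have hw2 : w = List.replicate ((w.take p).length + (w.drop p).length) a := by
      rw [List.replicate_add, ← e1, ← e2, List.take_append_drop]
    rw [hw2]; simp

lemma suppPow_pow {a : α} {f : Mag α} (hf : SuppPow a f) (n : ℕ) : SuppPow a (f ^ n) := by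
  induction n with
  | zero => simpa using suppPow_one a
  | succ n ih => rw [pow_succ]; exact suppPow_mul ih hf

lemma suppPow_zpow (a : α) (e : ℤ) : SuppPow a ((gu a ^ e : (Mag α)ˣ) : Mag α) := by
  cases e with
  | ofNat n =>
      rw [Int.ofNat_eq_coe, zpow_natCast, Units.val_pow_eq_pow_val, gu_val]
      exact suppPow_pow (suppPow_ga a) n
  | negSucc n =>
      rw [zpow_negSucc, ← inv_pow, Units.val_pow_eq_pow_val, gu_inv_val]
      exact suppPow_pow (suppPow_ia a) (n+1)

lemma mul_single {f g : Mag α} (a : α) (hf : f [] = 1) (hg : g [] = 1) :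
    (f * g) [a] = f [a] + g [a] := by
  rw [mul_apply', conv_cons, conv_nil (fun u => f (a :: u)) g, hf, hg]
  ring

lemma pow_single {a : α} {f : Mag α} (hf : SuppPow a f) (n : ℕ) :
    (f ^ n) [a] = n * f [a] := by
  induction n with
  | zero => simp
  | succ n ih =>
      rw [pow_succ, mul_single a (suppPow_pow hf n).1 hf.1, ih]
      push_cast; ring

lemma zpow_single (a : α) (e : ℤ) : ((gu a ^ e : (Mag α)ˣ) : Mag α) [a] = e := by
  cases e with
  | ofNat n =>
      rw [Int.ofNat_eq_coe, zpow_natCast, Units.val_pow_eq_pow_val, gu_val,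
        pow_single (suppPow_ga a) n]
      simp
  | negSucc n =>
      rw [zpow_negSucc, ← inv_pow, Units.val_pow_eq_pow_val, gu_inv_val,
        pow_single (suppPow_ia a) (n+1)]
      simp [Int.negSucc_eq]

lemma prod_apply_long :
    ∀ (P : List (α × Mag α)), (∀ p ∈ P, SuppPow p.1 p.2) →
      ∀ w : List α, w.Chain' (· ≠ ·) → P.length < w.length →
      (P.map Prod.snd).prod w = 0 := by
  intro P
  induction P with
  | nil =>
      intro _ w _ hl
      cases w with
      | nil => simp at hl
      | cons b t => simp
  | cons q Q ih =>
      intro hP w hw hl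
      obtain ⟨a, F⟩ := q
      simp only [List.map_cons, List.prod_cons, List.length_cons] at hl ⊢
      rw [mul_apply]
      apply Finset.sum_eq_zero
      intro p hp
      have hp' : p ≤ w.length := by
        simp only [Finset.mem_range] at hp; omega
      rcases p with _ | _ | k
      · rw [List.take_zero, List.drop_zero,
          ih (fun x hx => hP x (List.mem_cons_of_mem _ hx)) w hw (by omega)]
        ring
      · rw [List.drop_one,
          ih (fun x hx => hP x (List.mem_cons_of_mem _ hx)) w.tail hw.tail
            (by rw [List.length_tail]; omega)]
        ring
      · by_cases hF : F (w.take (k+1+1)) = 0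
        · rw [hF]; ring
        exfalso
        have hrep := (hP ⟨a, F⟩ List.mem_cons_self).2 _ hF
        rw [List.length_take, min_eq_left hp'] at hrep
        have hw2 : w = a :: a :: (List.replicate k a ++ w.drop (k+1+1)) := by
          conv_lhs => rw [← List.take_append_drop (k+1+1) w]
          rw [hrep, List.replicate_succ, List.replicate_succ, List.cons_append,
            List.cons_append]
        rw [hw2] at hw
        exact (List.isChain_cons_cons.mp hw).1 rfl

lemma prod_apply_letters :
    ∀ (P : List (α × Mag α)), (∀ p ∈ P, SuppPow p.1 p.2) →
      (P.map Prod.fst).Chain' (· ≠ ·) →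
      (P.map Prod.snd).prod (P.map Prod.fst) = (P.map fun p => p.2 [p.1]).prod := by
  intro P
  induction P with
  | nil => simp
  | cons q Q ih =>
      intro hP hc
      obtain ⟨a, F⟩ := q
      simp only [List.map_cons, List.prod_cons]
      rw [List.map_cons] at hc
      set R := (Q.map Prod.snd).prod with hR
      set ws := Q.map Prod.fst with hws
      have hlen : ws.length = Q.length := by simp [hws]
      rw [mul_apply', conv_cons]
      have h1 : R (a :: ws) = 0 := by
        apply prod_apply_long Q (fun x hx => hP x (List.mem_cons_of_mem _ hx)) _ hc
        simp [hlen]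
      rw [h1, mul_zero, zero_add]
      have h2 : conv (fun u => F (a :: u)) R ws = F [a] * R ws := by
        rw [conv_apply (fun u => F (a :: u)) R ws]
        rw [Finset.sum_eq_single_of_mem 0 (Finset.mem_range.mpr (by omega))]
        · simp
        intro p hp hne
        by_cases hF : F (a :: ws.take p) = 0
        · simp [hF]
        exfalso
        have hrep := (hP ⟨a, F⟩ List.mem_cons_self).2 _ hF
        rw [List.length_cons, List.replicate_succ, List.cons.injEq] at hrep
        have hp' : p ≤ ws.length := by simp only [Finset.mem_range] at hp; omega
        have hlen : (ws.take p).length = p := by rw [List.length_take]; omega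
        obtain ⟨m, rfl⟩ : ∃ m, p = m + 1 := ⟨p - 1, by omega⟩
        have htk : ws.take (m+1) = a :: List.replicate m a := by
          rw [hrep.2, hlen, List.replicate_succ]
        have hws2 : ws = a :: (List.replicate m a ++ ws.drop (m+1)) := by
          conv_lhs => rw [← List.take_append_drop (m+1) ws]
          rw [htk, List.cons_append]
        rw [hws2] at hc
        exact (List.isChain_cons_cons.mp hc).1 rfl
      rw [h2, ih (fun x hx => hP x (List.mem_cons_of_mem _ hx)) hc.tail]

-- Stage 4 : the Magnus homomorphism
/-- The Magnus homomorphism into units of the series ring. -/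
noncomputable def mu : FreeGroup α →* (Mag α)ˣ := FreeGroup.lift gu

/-- coefficient series of a group element -/
noncomputable def muc : FreeGroup α →* Mag α :=
  (Units.coeHom (Mag α)).comp mu

lemma muc_apply (g : FreeGroup α) : muc g = ((mu g : (Mag α)ˣ) : Mag α) := rfl

lemma mu_of (a : α) : mu (FreeGroup.of a) = gu a := FreeGroup.lift_apply_of

/-- exponent of a letter -/
def rexp (b : Bool) : ℤ := if b then 1 else -1

lemma rexp_ne_zero (b : Bool) : rexp b ≠ 0 := by cases b <;> simp [rexp]
lemma rexp_mul_self (b : Bool) : rexp b * rexp b = 1 := by cases b <;> simp [rexp]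

/-- collect a word into blocks of equal letters with integer exponents -/
def pack : List (α × Bool) → List (α × ℤ)
  | [] => []
  | (a, b) :: t =>
    match pack t with
    | [] => [(a, rexp b)]
    | (c, e) :: r => if c = a then (a, rexp b + e) :: r else (a, rexp b) :: (c, e) :: r

def prodOf (P : List (α × ℤ)) : FreeGroup α := (P.map fun p => FreeGroup.of p.1 ^ p.2).prod

lemma mk_single (a : α) (b : Bool) : FreeGroup.mk [(a, b)] = FreeGroup.of a ^ rexp b := by
  cases b
  · show FreeGroup.mk [(a, false)] = _
    have : FreeGroup.mk [(a, false)] = (FreeGroup.of a)⁻¹ := by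
      rw [show FreeGroup.of a = FreeGroup.mk [(a, true)] from rfl, FreeGroup.inv_mk]
      rfl
    rw [this, rexp]; norm_num
  · show FreeGroup.mk [(a, true)] = _
    rw [rexp]; norm_num
    rfl

lemma prodOf_cons (x : α × ℤ) (P : List (α × ℤ)) :
    prodOf (x :: P) = FreeGroup.of x.1 ^ x.2 * prodOf P := by
  rw [prodOf, List.map_cons, List.prod_cons]; rfl

lemma prodOf_pack : ∀ L : List (α × Bool), prodOf (pack L) = FreeGroup.mk L := by
  intro L
  induction L with
  | nil => rfl
  | cons x t ih =>
      obtain ⟨a, b⟩ := x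
      have hmk : FreeGroup.mk ((a,b) :: t) = FreeGroup.of a ^ rexp b * FreeGroup.mk t := by
        rw [← mk_single, FreeGroup.mul_mk]; rfl
      rw [hmk, ← ih]
      show prodOf (match pack t with
        | [] => [(a, rexp b)]
        | (c, e) :: r => if c = a then (a, rexp b + e) :: r else (a, rexp b) :: (c, e) :: r) = _
      cases hp : pack t with
      | nil => dsimp only; simp [prodOf]
      | cons ce r =>
          obtain ⟨c, e⟩ := ce
          dsimp only
          by_cases hca : c = a
          · subst hca
            rw [if_pos rfl, prodOf_cons, prodOf_cons, zpow_add, mul_assoc]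
          · rw [if_neg hca, prodOf_cons]





/-- a word is reduced -/
def IsRed (L : List (α × Bool)) : Prop := FreeGroup.reduce L = L

lemma isRed_tail {x : α × Bool} {t : List (α × Bool)} (h : IsRed (x :: t)) : IsRed t := by
  cases hr : FreeGroup.reduce t with
  | nil =>
      have h2 : x :: t = [x] := by
        rw [IsRed, FreeGroup.reduce.cons, hr] at h; exact h.symm
      have : t = [] := by injection h2
      rw [this]; rfl
  | cons hd tl =>
      have hlen : (FreeGroup.reduce t).length ≤ t.length :=
        FreeGroup.Red.length_le FreeGroup.reduce.red
      rw [IsRed, FreeGroup.reduce.cons, hr] at h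
      dsimp only at h
      split_ifs at h with hcond
      · exfalso
        have := congrArg List.length h
        rw [hr] at hlen
        simp at this hlen; omega
      · have h3 : t = hd :: tl := by
          injection h with h1 h2; exact h2.symm
        rw [IsRed, hr, h3]

lemma bool_ne_iff {b b' : Bool} (h : b ≠ b') : b = !b' := by
  cases b <;> cases b' <;> simp_all

lemma isRed_head {a a' : α} {b b' : Bool} {t : List (α × Bool)}
    (h : IsRed ((a, b) :: (a', b') :: t)) (hab : a = a') : b = b' := by
  by_contra hbb
  have hb : b = !b' := bool_ne_iff hbb
  have ht : IsRed ((a', b') :: t) := isRed_tail h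
  have h2 : FreeGroup.reduce ((a, b) :: (a', b') :: t) = t := by
    rw [FreeGroup.reduce.cons, ht]
    dsimp only
    rw [if_pos ⟨hab, hb⟩]
  rw [IsRed, h2] at h
  have := congrArg List.length h
  simp at this; omega

lemma pack_cons (a : α) (b : Bool) (t : List (α × Bool)) :
    pack ((a, b) :: t) = match pack t with
      | [] => [(a, rexp b)]
      | (c, e) :: r => if c = a then (a, rexp b + e) :: r else (a, rexp b) :: (c, e) :: r := rfl

lemma pack_spec : ∀ L : List (α × Bool), IsRed L →
    (List.Chain' (fun p q => p.1 ≠ q.1) (pack L) ∧ ∀ p ∈ pack L, p.2 ≠ 0) ∧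
    (∀ a b t, L = (a, b) :: t → ∃ e r, pack L = (a, e) :: r ∧ 0 < e * rexp b) := by
  intro L
  induction L with
  | nil =>
      intro _
      refine ⟨⟨List.isChain_nil, by simp [pack]⟩, ?_⟩
      intro a b t h; exact absurd h (by simp)
  | cons x t ih =>
      obtain ⟨a, b⟩ := x
      intro h
      have ht := isRed_tail h
      obtain ⟨⟨hch, hnz⟩, hhead⟩ := ih ht
      cases t with
      | nil =>
          have hpL : pack [(a, b)] = [(a, rexp b)] := rfl
          refine ⟨⟨?_, ?_⟩, ?_⟩
          · rw [hpL]; exact List.isChain_singleton _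
          · rw [hpL]; intro p hp
            rcases List.mem_singleton.mp hp with rfl
            exact rexp_ne_zero b
          · intro a₀ b₀ t₀ h₀
            injection h₀ with h1 h2
            injection h1 with ha hb
            subst ha; subst hb; subst h2
            refine ⟨rexp b, [], hpL, by rw [rexp_mul_self]; norm_num⟩
      | cons y t' =>
          obtain ⟨a', b'⟩ := y
          obtain ⟨e', r', hpt, hsign⟩ := hhead a' b' t' rfl
          rw [hpt] at hch hnz
          by_cases hca : a' = a
          · subst hca
            have hbb : b = b' := isRed_head h rfl
            subst hbb
            have hpL : pack ((a', b) :: (a', b) :: t') = (a', rexp b + e') :: r' := by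
              rw [pack_cons, hpt]
              dsimp only
              rw [if_pos rfl]
            have hpos : 0 < (rexp b + e') * rexp b := by
              rw [add_mul, rexp_mul_self]
              linarith
            have hne0 : rexp b + e' ≠ 0 := by
              intro h0; rw [h0, zero_mul] at hpos; exact lt_irrefl 0 hpos
            refine ⟨⟨?_, ?_⟩, ?_⟩
            · rw [hpL]
              simp only [List.Chain'] at hch ⊢
              rw [List.isChain_cons] at hch ⊢
              exact ⟨hch.1, hch.2⟩
            · rw [hpL]
              intro p hp
              rcases List.mem_cons.mp hp with rfl | hp'
              · exact hne0
              · exact hnz p (List.mem_cons_of_mem _ hp')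
            · intro a₀ b₀ t₀ h₀
              injection h₀ with h1 h2
              injection h1 with ha hb
              subst ha; subst hb
              exact ⟨rexp b + e', r', hpL, hpos⟩
          · have hpL : pack ((a, b) :: (a', b') :: t') = (a, rexp b) :: (a', e') :: r' := by
              rw [pack_cons, hpt]
              dsimp only
              rw [if_neg hca]
            refine ⟨⟨?_, ?_⟩, ?_⟩
            · rw [hpL]
              simp only [List.Chain']
              rw [List.isChain_cons_cons]
              exact ⟨fun hh => hca hh.symm, hch⟩
            · rw [hpL]
              intro p hp
              rcases List.mem_cons.mp hp with rfl | hp'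
              · exact rexp_ne_zero b
              · exact hnz p hp'
            · intro a₀ b₀ t₀ h₀
              injection h₀ with h1 h2
              injection h1 with ha hb
              subst ha; subst hb
              refine ⟨rexp b, (a', e') :: r', hpL, by rw [rexp_mul_self]; norm_num⟩





lemma muc_zpow (a : α) (e : ℤ) :
    muc (FreeGroup.of a ^ e) = ((gu a ^ e : (Mag α)ˣ) : Mag α) := by
  rw [muc_apply, map_zpow, mu_of]

lemma muc_ne_one {g : FreeGroup α} (hg : g ≠ 1) : muc g ≠ 1 := by
  have hred : IsRed (g.toWord) := FreeGroup.reduce_toWord g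
  obtain ⟨⟨hch, hnz⟩, hhead⟩ := pack_spec g.toWord hred
  have hgP : g = prodOf (pack g.toWord) := by rw [prodOf_pack, FreeGroup.mk_toWord]
  set P := pack g.toWord with hPdef
  have hPne : P ≠ [] := by
    cases hLw : g.toWord with
    | nil => exact absurd (FreeGroup.toWord_eq_nil_iff.mp hLw) hg
    | cons x t =>
        obtain ⟨a, b⟩ := x
        obtain ⟨e, r, hp, -⟩ := hhead a b t hLw
        rw [hp]
        simp
  set Q : List (α × Mag α) := P.map (fun p => (p.1, ((gu p.1 ^ p.2 : (Mag α)ˣ) : Mag α)))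
    with hQdef
  have hQs : ∀ q ∈ Q, SuppPow q.1 q.2 := by
    intro q hq
    obtain ⟨p, hp, rfl⟩ := List.mem_map.mp hq
    exact suppPow_zpow p.1 p.2
  have hQF : Q.map Prod.fst = P.map Prod.fst := by rw [hQdef, List.map_map]; rfl
  have hchn : (Q.map Prod.fst).Chain' (· ≠ ·) := by
    rw [hQF]
    exact (List.isChain_map Prod.fst).mpr hch
  have hval : muc g = (Q.map Prod.snd).prod := by
    rw [hgP, prodOf, map_list_prod, List.map_map, hQdef, List.map_map]
    congr 1
    apply List.map_congr_left
    intro p hp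
    exact muc_zpow p.1 p.2
  have hco := prod_apply_letters Q hQs hchn
  intro h1
  have hwne : Q.map Prod.fst ≠ [] := by
    rw [hQF]
    intro h; exact hPne (List.map_eq_nil_iff.mp h)
  have hzero : (1 : Mag α) (Q.map Prod.fst) = 0 := by
    cases hq : Q.map Prod.fst with
    | nil => exact absurd hq hwne
    | cons c u => simp
  have hprod : ((Q.map fun p => p.2 [p.1]).prod : ℤ) ≠ 0 := by
    apply List.prod_ne_zero
    intro h0
    obtain ⟨q, hq, hval0⟩ := List.mem_map.mp h0
    obtain ⟨p, hp, rfl⟩ := List.mem_map.mp hq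
    dsimp only at hval0
    rw [zpow_single] at hval0
    exact hnz p hp hval0
  rw [← hco, ← hval, h1, hzero] at hprod
  exact hprod rfl

lemma muc_injective : Function.Injective (muc : FreeGroup α → Mag α) := by
  intro g h he
  by_contra hne
  have h1 : g * h⁻¹ ≠ 1 := fun h0 => hne (by
    have := mul_inv_eq_one.mp h0; exact this)
  apply muc_ne_one h1
  have hu : mu g = mu h := Units.ext he
  rw [muc_apply, map_mul, map_inv, hu, mul_inv_cancel]
  rfl


-- Stage 6: the order
/-- degree-lexicographic strict order on words -/
def wlt (v w : List α) : Prop := v.length < w.length ∨ (v.length = w.length ∧ v < w)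

lemma wlt_irrefl (v : List α) : ¬ wlt v v := by
  rintro (h | ⟨-, h⟩)
  · omega
  · exact lt_irrefl _ h

lemma wlt_trans {u v w : List α} (h1 : wlt u v) (h2 : wlt v w) : wlt u w := by
  rcases h1 with h1 | ⟨e1, l1⟩ <;> rcases h2 with h2 | ⟨e2, l2⟩
  · exact Or.inl (by omega)
  · exact Or.inl (by omega)
  · exact Or.inl (by omega)
  · exact Or.inr ⟨by omega, lt_trans l1 l2⟩

lemma wlt_trichotomy (v w : List α) : wlt v w ∨ v = w ∨ wlt w v := by
  rcases Nat.lt_trichotomy v.length w.length with h | h | h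
  · exact Or.inl (Or.inl h)
  · rcases lt_trichotomy v w with h' | h' | h'
    · exact Or.inl (Or.inr ⟨h, h'⟩)
    · exact Or.inr (Or.inl h')
    · exact Or.inr (Or.inr (Or.inr ⟨h.symm, h'⟩))
  · exact Or.inr (Or.inr (Or.inl h))

/-- lexicographic comparison of series along `wlt` -/
def mlt (f g : Mag α) : Prop :=
  ∃ w, (∀ v, wlt v w → f v = g v) ∧ f w < g w

lemma mlt_irrefl (f : Mag α) : ¬ mlt f f := by
  rintro ⟨w, -, h⟩; exact lt_irrefl _ h

lemma mlt_trans {f g h : Mag α} (h1 : mlt f g) (h2 : mlt g h) : mlt f h := by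
  obtain ⟨w1, e1, l1⟩ := h1
  obtain ⟨w2, e2, l2⟩ := h2
  rcases wlt_trichotomy w1 w2 with hw | rfl | hw
  · refine ⟨w1, fun v hv => ?_, ?_⟩
    · rw [e1 v hv, e2 v (wlt_trans hv hw)]
    · rw [← e2 w1 hw]; exact l1
  · exact ⟨w1, fun v hv => by rw [e1 v hv, e2 v hv], lt_trans l1 l2⟩
  · refine ⟨w2, fun v hv => ?_, ?_⟩
    · rw [e1 v (wlt_trans hv hw), e2 v hv]
    · rw [e1 w2 hw]; exact l2

/-- a series has all letters of its support within `S` -/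
def Carr (S : Finset α) (f : Mag α) : Prop := ∀ w, f w ≠ 0 → ∀ a ∈ w, a ∈ S

lemma carr_mul {S T : Finset α} {f g : Mag α} (hf : Carr S f) (hg : Carr T g) :
    Carr (S ∪ T) (f * g) := by
  intro w hw a ha
  rw [mul_apply] at hw
  obtain ⟨p, -, hne⟩ := Finset.exists_ne_zero_of_sum_ne_zero hw
  obtain ⟨h1, h2⟩ := mul_ne_zero_iff.mp hne
  have ha' : a ∈ w.take p ++ w.drop p := by rw [List.take_append_drop]; exact ha
  rcases List.mem_append.mp ha' with h | h
  · exact Finset.mem_union_left _ (hf _ h1 a h)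
  · exact Finset.mem_union_right _ (hg _ h2 a h)

lemma carr_one : Carr (∅ : Finset α) (1 : Mag α) := by
  intro w hw a ha
  cases w with
  | nil => simp at ha
  | cons b t => simp at hw

lemma carr_ga (a : α) : Carr {a} (ga a) := by
  intro w hw x hx
  have h : w = [] ∨ w = [a] := by by_contra h; simp [ga, h] at hw
  rcases h with rfl | rfl
  · simp at hx
  · simpa using hx

lemma carr_ia (a : α) : Carr {a} (ia a) := by
  intro w hw x hx
  have h : w = List.replicate w.length a := by by_contra h; simp [ia, h] at hw
  rw [h] at hx
  simpa using (List.eq_of_mem_replicate hx)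

lemma carr_muc (g : FreeGroup α) : ∃ S : Finset α, Carr S (muc g) ∧ Carr S (muc g⁻¹) := by
  induction g using FreeGroup.induction_on with
  | C1 => exact ⟨∅, by simpa using carr_one, by simpa using carr_one⟩
  | of a =>
      refine ⟨{a}, ?_, ?_⟩
      · rw [show muc (FreeGroup.of a) = ga a by
          rw [muc_apply, mu_of, gu_val]]
        exact carr_ga a
      · rw [show muc (FreeGroup.of a)⁻¹ = ia a by
          rw [muc_apply, map_inv, mu_of,
            gu_inv_val]]
        exact carr_ia a
  | inv_of a ih =>
      obtain ⟨S, h1, h2⟩ := ih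
      exact ⟨S, h2, by simpa using h1⟩
  | mul x y ihx ihy =>
      obtain ⟨S, hs1, hs2⟩ := ihx
      obtain ⟨T, ht1, ht2⟩ := ihy
      refine ⟨S ∪ T, by rw [map_mul]; exact carr_mul hs1 ht1, ?_⟩
      rw [mul_inv_rev, map_mul]
      simpa [Finset.union_comm] using carr_mul ht2 hs2





lemma finite_level (S : Finset α) (n : ℕ) :
    {w : List α | w.length = n ∧ ∀ a ∈ w, a ∈ S}.Finite := by
  have : {w : List α | w.length = n ∧ ∀ a ∈ w, a ∈ S} ⊆
      Set.range (fun φ : Fin n → {x // x ∈ S} => List.ofFn (fun i => (φ i : α))) := by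
    rintro w ⟨hlen, hmem⟩
    subst hlen
    refine ⟨fun i => ⟨w.get i, hmem _ (List.get_mem w i)⟩, ?_⟩
    exact List.ofFn_get w
  exact (Set.finite_range _).subset this

lemma mlt_total {f g : Mag α} {S : Finset α} (hf : Carr S f) (hg : Carr S g)
    (hne : f ≠ g) : mlt f g ∨ mlt g f := by
  have hD : ∃ n : ℕ, ∃ w : List α, w.length = n ∧ f w ≠ g w := by
    by_contra h
    push_neg at h
    exact hne (funext fun w => h w.length w rfl)
  classical
  set n0 := Nat.find hD with hn0
  obtain ⟨w0, hw0len, hw0ne⟩ := Nat.find_spec hD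
  set E := {w : List α | w.length = n0 ∧ f w ≠ g w} with hE
  have hEsub : E ⊆ {w : List α | w.length = n0 ∧ ∀ a ∈ w, a ∈ S} := by
    rintro w ⟨h1, h2⟩
    refine ⟨h1, fun a ha => ?_⟩
    by_cases hz : f w = 0
    · have : g w ≠ 0 := fun hh => h2 (hz.trans hh.symm)
      exact hg w this a ha
    · exact hf w hz a ha
  have hEfin : E.Finite := (finite_level S n0).subset hEsub
  have hEne : E.Nonempty := ⟨w0, hw0len, hw0ne⟩
  obtain ⟨w, hwE, hwmin⟩ := Set.exists_min_image E id hEfin hEne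
  have hbelow : ∀ v, wlt v w → f v = g v := by
    intro v hv
    by_contra hfv
    rcases hv with hlt | ⟨heq, hlex⟩
    · have : n0 ≤ v.length := Nat.find_min' hD ⟨v, rfl, hfv⟩
      rw [hwE.1] at hlt; omega
    · have hvE : v ∈ E := ⟨by rw [heq, hwE.1], hfv⟩
      have := hwmin v hvE
      simp only [id] at this
      exact absurd hlex (not_lt.mpr this)
  rcases lt_trichotomy (f w) (g w) with h | h | h
  · exact Or.inl ⟨w, hbelow, h⟩
  · exact absurd h hwE.2
  · exact Or.inr ⟨w, fun v hv => (hbelow v hv).symm, h⟩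

lemma muc_nil (g : FreeGroup α) : muc g [] = 1 := by
  induction g using FreeGroup.induction_on with
  | C1 => simp
  | of a =>
      rw [show muc (FreeGroup.of a) = ga a by
        rw [muc_apply, mu_of, gu_val]]
      simp [ga]
  | inv_of a _ =>
      rw [show muc (FreeGroup.of a)⁻¹ = ia a by
        rw [muc_apply, map_inv, mu_of,
          gu_inv_val]]
      simp [ia]
  | mul x y ihx ihy =>
      rw [map_mul]
      have : (muc x * muc y) [] = muc x [] * muc y [] := by
        rw [mul_apply]; simp
      rw [this, ihx, ihy, mul_one]

lemma conv_left_min {u d : Mag α} {w : List α} (hu : u [] = 1)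
    (hd : ∀ x, wlt x w → d x = 0) {v : List α} (hv : v.length ≤ w.length) :
    (u * d) v = d v := by
  rw [mul_apply]
  rw [Finset.sum_eq_single_of_mem 0 (Finset.mem_range.mpr (by omega))]
  · simp [hu]
  intro p hp hpne
  have : (v.drop p).length < w.length := by
    rw [List.length_drop]
    simp only [Finset.mem_range] at hp
    omega
  rw [hd _ (Or.inl this), mul_zero]

lemma conv_right_min {u d : Mag α} {w : List α} (hu : u [] = 1)
    (hd : ∀ x, wlt x w → d x = 0) {v : List α} (hv : v.length ≤ w.length) :
    (d * u) v = d v := by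
  rw [mul_apply]
  rw [Finset.sum_eq_single_of_mem v.length (Finset.mem_range.mpr (by omega))]
  · simp [hu]
  intro p hp hpne
  have hlt : (v.take p).length < w.length := by
    rw [List.length_take]
    simp only [Finset.mem_range] at hp
    omega
  rw [hd _ (Or.inl hlt), zero_mul]

lemma mlt_mul_left {f g : Mag α} (u : Mag α) (hu : u [] = 1) (h : mlt f g) :
    mlt (u * f) (u * g) := by
  obtain ⟨w, hbelow, hlt⟩ := h
  have hd : ∀ x, wlt x w → (g - f) x = 0 := by
    intro x hx; rw [sub_apply, hbelow x hx, sub_self]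
  refine ⟨w, fun v hv => ?_, ?_⟩
  · have hlen : v.length ≤ w.length := by
      rcases hv with h1 | ⟨h1, -⟩ <;> omega
    have := conv_left_min hu hd hlen
    rw [mul_sub, sub_apply, sub_apply] at this
    linarith [this, hbelow v hv]
  · have := conv_left_min hu hd (le_refl w.length)
    rw [mul_sub, sub_apply, sub_apply] at this
    linarith [this, hlt]

lemma mlt_mul_right {f g : Mag α} (u : Mag α) (hu : u [] = 1) (h : mlt f g) :
    mlt (f * u) (g * u) := by
  obtain ⟨w, hbelow, hlt⟩ := h
  have hd : ∀ x, wlt x w → (g - f) x = 0 := by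
    intro x hx; rw [sub_apply, hbelow x hx, sub_self]
  refine ⟨w, fun v hv => ?_, ?_⟩
  · have hlen : v.length ≤ w.length := by
      rcases hv with h1 | ⟨h1, -⟩ <;> omega
    have := conv_right_min hu hd hlen
    rw [sub_mul, sub_apply, sub_apply] at this
    linarith [this, hbelow v hv]
  · have := conv_right_min hu hd (le_refl w.length)
    rw [sub_mul, sub_apply, sub_apply] at this
    linarith [this, hlt]


lemma carr_mono {S T : Finset α} (hST : S ⊆ T) {f : Mag α} (hf : Carr S f) : Carr T f :=
  fun w hw a ha => hST (hf w hw a ha)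

end Linear
end FGBO

/-- A group is bi-orderable if it admits a strict total order invariant
under both left and right multiplication. -/
def BiOrderable (G : Type*) [Group G] : Prop :=
  ∃ r : G → G → Prop, IsStrictTotalOrder G r ∧
    ∀ g h k : G, r g h → r (g * k) (h * k) ∧ r (k * g) (k * h)

theorem freeGroup_biOrderable (α : Type*) : BiOrderable (FreeGroup α) := by
  letI : LinearOrder α := IsWellOrder.linearOrder WellOrderingRel
  classical
  refine ⟨fun g h => FGBO.mlt (FGBO.muc g) (FGBO.muc h), ?_, ?_⟩
  · refine { toTrichotomous := ⟨?_⟩, toIsStrictOrder :=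
      { toIrrefl := ⟨?_⟩, toIsTrans := ⟨?_⟩ } }
    · intro g h hn1 hn2
      by_cases hgh : g = h
      · exact hgh
      · obtain ⟨S, hSg, -⟩ := FGBO.carr_muc g
        obtain ⟨T, hTh, -⟩ := FGBO.carr_muc h
        have hne : FGBO.muc g ≠ FGBO.muc h := fun he => hgh (FGBO.muc_injective he)
        rcases FGBO.mlt_total (FGBO.carr_mono Finset.subset_union_left hSg)
          (FGBO.carr_mono Finset.subset_union_right hTh) hne with hh | hh
        · exact absurd hh hn1
        · exact absurd hh hn2
    · intro g
      exact FGBO.mlt_irrefl _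
    · intro g h k h1 h2
      exact FGBO.mlt_trans h1 h2
  · intro g h k hgh
    constructor
    · show FGBO.mlt (FGBO.muc (g * k)) (FGBO.muc (h * k))
      rw [show FGBO.muc (g * k) = FGBO.muc g * FGBO.muc k from map_mul _ _ _,
        show FGBO.muc (h * k) = FGBO.muc h * FGBO.muc k from map_mul _ _ _]
      exact FGBO.mlt_mul_right _ (FGBO.muc_nil k) hgh
    · show FGBO.mlt (FGBO.muc (k * g)) (FGBO.muc (k * h))
      rw [show FGBO.muc (k * g) = FGBO.muc k * FGBO.muc g from map_mul _ _ _,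
        show FGBO.muc (k * h) = FGBO.muc k * FGBO.muc h from map_mul _ _ _]
      exact FGBO.mlt_mul_left _ (FGBO.muc_nil k) hgh
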